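/- Let n ≥ 1, let g : {1,…,n} → ℝ take positive pairwise distinct values, and let σ be a permutation of {1,…,n} such that 0 < g(σ(1)) < g(σ(2)) < ⋯ < g(σ(n)). Then the n×n matrix K with entries K_{ij} = min(g(i), g(j)) satisfies det(K) = g(σ(1)) · Π_{k=1}^{n−1} (g(σ(k+1)) − g(σ(k))). -/

import Mathlib

open Matrix in
lemma det_min_aux (n : ℕ) (h : Fin (n + 1) → ℝ) :
    (Matrix.of fun i j : Fin (n + 1) => h (min i j)).det
      = h 0 * ∏ k : Fin n, (h k.succ - h k.castSucc) := by
  set d : Fin (n + 1) → ℝ := fun k =>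
    Fin.cases (h 0) (fun j => h j.succ - h j.castSucc) k with hd
  have sumIic : ∀ m : Fin (n + 1), ∑ k : Fin (n + 1), (if k ≤ m then d k else 0) = h m := by
    intro m
    induction m using Fin.induction with
    | zero =>
      have : ∀ k : Fin (n + 1), (if k ≤ 0 then d k else 0) = if k = 0 then d k else 0 := by
        intro k
        by_cases hk : k = 0 <;> simp [hk, Fin.le_zero_iff]
      rw [Finset.sum_congr rfl (fun k _ => this k), Finset.sum_ite_eq' Finset.univ 0 d]
      simp [hd]
    | succ m ih =>
      have split : ∀ k : Fin (n + 1), (if k ≤ m.succ then d k else 0)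
          = (if k ≤ m.castSucc then d k else 0) + (if k = m.succ then d k else 0) := by
        intro k
        rcases le_or_gt k m.castSucc with hk | hk
        · have h1 : k ≤ m.succ := hk.trans m.castSucc_le_succ
          have h2 : k ≠ m.succ := by
            intro he; rw [he] at hk
            exact absurd hk (not_le.mpr (Fin.castSucc_lt_succ (i := m)))
          simp [h1, hk, h2]
        · by_cases he : k = m.succ
          · simp [he, not_le.mpr hk, Fin.castSucc_lt_succ (i := m)]
          · have h1 : ¬ k ≤ m.succ := by
              intro hle
              rcases lt_or_eq_of_le hle with hlt | heq
              · exact absurd (Fin.le_castSucc_iff.mpr hlt) (not_le.mpr hk)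
              · exact he heq
            simp [h1, not_le.mpr hk, he]
      rw [Finset.sum_congr rfl (fun k _ => split k), Finset.sum_add_distrib, ih,
        Finset.sum_ite_eq' Finset.univ m.succ d]
      simp only [Finset.mem_univ, if_true, hd, Fin.cases_succ]
      ring
  set L : Matrix (Fin (n + 1)) (Fin (n + 1)) ℝ :=
    Matrix.of (fun i k : Fin (n + 1) => if k ≤ i then (1 : ℝ) else 0) with hL
  have key : (Matrix.of fun i j : Fin (n + 1) => h (min i j))
      = L * Matrix.diagonal d * Lᵀ := by
    ext i j
    rw [Matrix.mul_apply]
    have : ∀ k : Fin (n + 1), (L * Matrix.diagonal d) i k * Lᵀ k j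
        = if k ≤ min i j then d k else 0 := by
      intro k
      rw [Matrix.mul_diagonal, Matrix.transpose_apply, hL]
      simp only [Matrix.of_apply, le_min_iff]
      by_cases h1 : k ≤ i <;> by_cases h2 : k ≤ j <;> simp [h1, h2]
    rw [Finset.sum_congr rfl (fun k _ => this k), sumIic]
    simp
  have detL : L.det = 1 := by
    rw [Matrix.det_of_lowerTriangular L (fun i j hij => by
      have hij' : i < j := hij
      simp [hL, not_le.mpr hij'])]
    simp [hL]
  have detLT : Lᵀ.det = 1 := by rw [Matrix.det_transpose, detL]
  rw [key, Matrix.det_mul, Matrix.det_mul, detL, detLT, Matrix.det_diagonal,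
    Fin.prod_univ_succ]
  simp [hd]

theorem stmt_11 (n : ℕ) (g : Fin (n + 1) → ℝ) (hpos : ∀ i, 0 < g i)
    (hinj : Function.Injective g)
    (σ : Equiv.Perm (Fin (n + 1))) (hmono : StrictMono (fun k => g (σ k))) :
    (Matrix.of fun i j : Fin (n + 1) => min (g i) (g j)).det
      = g (σ 0) * ∏ k : Fin n, (g (σ k.succ) - g (σ k.castSucc)) := by
  have := Matrix.det_submatrix_equiv_self σ (Matrix.of fun i j : Fin (n + 1) => min (g i) (g j))
  rw [← this]
  have heq : (Matrix.of fun i j : Fin (n + 1) => min (g i) (g j)).submatrix σ σ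
      = Matrix.of fun i j : Fin (n + 1) => (fun k => g (σ k)) (min i j) := by
    ext i j
    simp only [Matrix.submatrix_apply, Matrix.of_apply]
    exact (hmono.monotone.map_min).symm
  rw [heq, det_min_aux n (fun k => g (σ k))]
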